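/- For every open dense family $\mathcal{U} \subseteq [\omega]^\omega$ (in the $\subseteq^*$ sense) and every sequence $(A_n)$ of finite subsets of $\omega$, the family $\mathcal{U}' = \{I \in [\omega]^\omega : \exists m \in \omega \text{ such that } (A_n)_n \text{ admits a nice dissection over } I \setminus m\}$ is open dense in $[\omega]^\omega$: every infinite set contains an infinite member of $\mathcal{U}'$, and $\mathcal{U}'$ is closed under infinite almost-subsets. -/

import Mathlib

/-- A family `𝒜 ⊆ [ω]^ω` is open dense in `([ω]^ω, ⊆*)`. -/
def OpenDense (𝒜 : Set (Set ℕ)) : Prop :=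
  (∀ A ∈ 𝒜, A.Infinite) ∧
  (∀ B : Set ℕ, B.Infinite → ∃ A ∈ 𝒜, A ⊆ B) ∧
  (∀ A ∈ 𝒜, ∀ A' : Set ℕ, A'.Infinite → (A' \ A).Finite → A' ∈ 𝒜)

/-- `(A n)` admits a nice dissection over `X`: `A n = U n ∪ D n` disjointly for `n ∈ X`,
with `(U n)` increasing along `X` and `(D n)` pairwise disjoint along `X`. -/
def NiceDissection (A : ℕ → Set ℕ) (X : Set ℕ) : Prop :=
  ∃ U D : ℕ → Set ℕ,
    (∀ n ∈ X, A n = U n ∪ D n ∧ Disjoint (U n) (D n)) ∧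
    (∀ m ∈ X, ∀ n ∈ X, m ≤ n → U m ⊆ U n) ∧
    (∀ m ∈ X, ∀ n ∈ X, m ≠ n → Disjoint (D m) (D n))

/-- Nice dissections restrict to subsets. -/
lemma NiceDissection.mono {A : ℕ → Set ℕ} {X Y : Set ℕ}
    (h : NiceDissection A X) (hYX : Y ⊆ X) : NiceDissection A Y := by
  obtain ⟨U, D, h1, h2, h3⟩ := h
  exact ⟨U, D, fun n hn => h1 n (hYX hn),
    fun m hm n hn hmn => h2 m (hYX hm) n (hYX hn) hmn,
    fun m hm n hn hmn => h3 m (hYX hm) n (hYX hn) hmn⟩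

/-- Generic dependent choice chain. -/
lemma exists_chain {α : Type*} (P : α → Prop) (R : α → α → Prop)
    (a0 : α) (ha0 : P a0) (hstep : ∀ a, P a → ∃ b, P b ∧ R a b) :
    ∃ f : ℕ → α, f 0 = a0 ∧ (∀ k, P (f k)) ∧ ∀ k, R (f k) (f (k + 1)) := by
  choose! g hg1 hg2 using hstep
  have hP : ∀ k, P (Nat.rec a0 (fun _ x => g x) k : α) := by
    intro k; induction k with
    | zero => exact ha0
    | succ k ih => exact hg1 _ ih
  exact ⟨fun k => Nat.rec a0 (fun _ x => g x) k, rfl, hP, fun k => hg2 _ (hP k)⟩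

/-- Pigeonhole: stabilize the trace on a finite set over an infinite set. -/
lemma stabilize (A : ℕ → Set ℕ) (B F : Set ℕ) (hB : B.Infinite) (hF : F.Finite) (l : ℕ) :
    ∃ C : Set ℕ, C.Infinite ∧ C ⊆ B ∧ (∀ x ∈ C, l < x) ∧
      ∀ m ∈ C, ∀ p ∈ C, A m ∩ F = A p ∩ F := by
  set B' : Set ℕ := {x ∈ B | l < x} with hB'def
  have hB' : B'.Infinite := by
    have hsub : B \ B' ⊆ Set.Iic l := by
      rintro x ⟨hxB, hx⟩
      simp only [hB'def, Set.mem_setOf_eq, not_and] at hx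
      exact le_of_not_gt (hx hxB)
    have : (B \ B').Finite := (Set.finite_Iic l).subset hsub
    have := hB.diff this
    refine this.mono ?_
    rintro x ⟨hx1, hx2⟩
    simp only [Set.mem_diff, not_and, not_not] at hx2
    exact hx2 hx1
  have key : ∃ T ⊆ F, {n ∈ B' | A n ∩ F = T}.Infinite := by
    by_contra h
    push_neg at h
    have hcov : B' ⊆ ⋃ T ∈ {T : Set ℕ | T ⊆ F}, {n ∈ B' | A n ∩ F = T} := by
      intro x hx
      exact Set.mem_biUnion (Set.inter_subset_right) ⟨hx, rfl⟩
    have hfin : (⋃ T ∈ {T : Set ℕ | T ⊆ F}, {n ∈ B' | A n ∩ F = T}).Finite :=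
      Set.Finite.biUnion hF.finite_subsets
        (fun T hT => h T hT)
    exact hB' (hfin.subset hcov)
  obtain ⟨T, _, hT⟩ := key
  refine ⟨{n ∈ B' | A n ∩ F = T}, hT, fun x hx => hx.1.1, fun x hx => hx.1.2,
    fun m hm p hp => hm.2.trans hp.2.symm⟩

/-- The density core: every infinite set contains an infinite subset over which
`(A n)` admits a nice dissection. -/
lemma density_core (A : ℕ → Set ℕ) (hfin : ∀ n, (A n).Finite)
    (B : Set ℕ) (hB : B.Infinite) :
    ∃ I : Set ℕ, I ⊆ B ∧ I.Infinite ∧ NiceDissection A I := by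
  classical
  -- state: (current point, current infinite set, accumulated finite set)
  set P : ℕ × Set ℕ × Set ℕ → Prop :=
    fun s => s.2.1.Infinite ∧ s.2.1 ⊆ B ∧ s.1 ∈ s.2.1 ∧ s.2.2.Finite with hPdef
  set R : ℕ × Set ℕ × Set ℕ → ℕ × Set ℕ × Set ℕ → Prop :=
    fun s t => t.2.1 ⊆ s.2.1 ∧ (∀ x ∈ t.2.1, s.1 < x) ∧
      (∀ m ∈ t.2.1, ∀ p ∈ t.2.1, A m ∩ s.2.2 = A p ∩ s.2.2) ∧
      t.2.2 = s.2.2 ∪ A t.1 with hRdef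
  obtain ⟨n0, hn0⟩ := hB.nonempty
  have ha0 : P (n0, B, A n0) := ⟨hB, subset_rfl, hn0, hfin n0⟩
  have hstep : ∀ s, P s → ∃ t, P t ∧ R s t := by
    rintro ⟨n, C, F⟩ ⟨hC, hCB, hn, hF⟩
    obtain ⟨C', hC', hC'C, hgt, htr⟩ := stabilize A C F hC hF n
    obtain ⟨n', hn'⟩ := hC'.nonempty
    exact ⟨(n', C', F ∪ A n'), ⟨hC', hC'C.trans hCB, hn', hF.union (hfin n')⟩,
      hC'C, hgt, htr, rfl⟩
  obtain ⟨f, hf0, hPf, hRf⟩ := exists_chain P R (n0, B, A n0) ha0 hstep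
  set n : ℕ → ℕ := fun k => (f k).1 with hn
  set C : ℕ → Set ℕ := fun k => (f k).2.1 with hCdef
  set Fk : ℕ → Set ℕ := fun k => (f k).2.2 with hFdef
  -- basic facts
  have hmono : StrictMono n := by
    apply strictMono_nat_of_lt_succ
    intro k
    exact (hRf k).2.1 _ (hPf (k + 1)).2.2.1
  have hCanti : ∀ {k j}, k ≤ j → C j ⊆ C k := by
    intro k j hkj
    induction j with
    | zero => rw [Nat.le_zero.mp hkj]
    | succ j ih =>
      rcases eq_or_lt_of_le hkj with h | h
      · rw [h]
      · exact ((hRf j).1).trans (ih (Nat.lt_succ_iff.mp h))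
  have hnC : ∀ {k j}, k ≤ j → n j ∈ C k := fun hkj => hCanti hkj (hPf _).2.2.1
  -- Fk k = union of A (n i), i ≤ k
  have hFk : ∀ k, Fk k = ⋃ i ∈ {i : ℕ | i ≤ k}, A (n i) := by
    intro k
    induction k with
    | zero =>
      have h0' : Fk 0 = A (n 0) := by simp only [hFdef, hn, hf0]
      rw [h0']
      ext x; simp [Nat.le_zero]
    | succ k ih =>
      have hstep' : Fk (k + 1) = Fk k ∪ A (n (k + 1)) := (hRf k).2.2.2
      rw [hstep', ih]
      ext x
      simp only [Set.mem_union, Set.mem_iUnion, Set.mem_setOf_eq, exists_prop]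
      constructor
      · rintro (⟨i, hi, hx⟩ | hx)
        · exact ⟨i, hi.trans (Nat.le_succ k), hx⟩
        · exact ⟨k + 1, le_refl _, hx⟩
      · rintro ⟨i, hi, hx⟩
        rcases Nat.le_succ_iff_eq_or_le.mp hi with h | h
        · right; rwa [h] at hx
        · left; exact ⟨i, h, hx⟩
  -- trace constancy
  have htr : ∀ k, ∀ m ∈ C (k + 1), ∀ p ∈ C (k + 1), A m ∩ Fk k = A p ∩ Fk k :=
    fun k => (hRf k).2.2.1
  -- the dissection
  set G : ℕ → Set ℕ := fun j => ⋃ i ∈ {i : ℕ | i < j}, A (n i) with hGdef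
  have hG0 : G 0 = ∅ := by ext x; simp [hGdef]
  have hGsucc : ∀ k, G (k + 1) = Fk k := by
    intro k
    rw [hFk k]
    ext x
    simp [hGdef, Nat.lt_succ_iff]
  have hGmono : ∀ {i j}, i ≤ j → G i ⊆ G j := by
    intro i j hij
    apply Set.biUnion_subset_biUnion_left
    intro x hx
    exact lt_of_lt_of_le hx hij
  set U : ℕ → Set ℕ := fun x => A x ∩ ⋃ i ∈ {i : ℕ | n i < x}, A (n i) with hUdef
  set D : ℕ → Set ℕ := fun x => A x \ U x with hDdef
  have hUn : ∀ j, U (n j) = A (n j) ∩ G j := by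
    intro j
    simp only [hUdef, hGdef]
    ext x
    simp [hmono.lt_iff_lt]
  set I : Set ℕ := Set.range n with hIdef
  have hIB : I ⊆ B := by
    rintro x ⟨j, rfl⟩
    exact (hPf j).2.1 (hPf j).2.2.1
  have hIinf : I.Infinite := Set.infinite_range_of_injective hmono.injective
  refine ⟨I, hIB, hIinf, U, D, ?_, ?_, ?_⟩
  · rintro x ⟨j, rfl⟩
    constructor
    · exact (Set.union_diff_cancel Set.inter_subset_left).symm
    · exact Set.disjoint_sdiff_right
  · rintro x ⟨i, rfl⟩ y ⟨j, rfl⟩ hxy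
    have hij : i ≤ j := hmono.le_iff_le.mp hxy
    rw [hUn i, hUn j]
    rcases Nat.eq_zero_or_pos i with h | h
    · subst h; rw [hG0]; simp
    · obtain ⟨k, rfl⟩ : ∃ k, i = k + 1 := ⟨i - 1, by omega⟩
      rw [hGsucc k]
      have h1 := htr k (n (k + 1)) (hnC (le_refl _)) (n j) (hnC hij)
      rw [h1]
      intro x hx
      refine ⟨hx.1, hGmono hij ?_⟩
      rw [hGsucc k]
      exact hx.2
  · rintro x ⟨i, rfl⟩ y ⟨j, rfl⟩ hxy
    have hij : i ≠ j := fun h => hxy (by rw [h])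
    -- wlog i < j
    have key : ∀ i j : ℕ, i < j → Disjoint (D (n i)) (D (n j)) := by
      intro i j hij'
      rw [Set.disjoint_left]
      intro x hxi hxj
      have hxAi : x ∈ A (n i) := hxi.1
      have hxGj : x ∈ G j := by
        simp only [hGdef, Set.mem_iUnion, Set.mem_setOf_eq, exists_prop]
        exact ⟨i, hij', hxAi⟩
      have : x ∈ U (n j) := by
        rw [hUn j]; exact ⟨hxj.1, hxGj⟩
      exact hxj.2 this
    rcases lt_or_gt_of_ne hij with h | h
    · exact key i j h
    · exact (key j i h).symm

/-- For every open dense family `𝒰 ⊆ [ω]^ω` and every sequence `(A n)` of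
finite subsets of `ω`, the family
`𝒰' = {I ∈ [ω]^ω : ∃ m, (A n) admits a nice dissection over I \ m}` is open dense. -/
theorem stmt19 (𝒰 : Set (Set ℕ)) (h𝒰 : OpenDense 𝒰)
    (A : ℕ → Set ℕ) (hfin : ∀ n, (A n).Finite) :
    OpenDense {I : Set ℕ | I.Infinite ∧ ∃ m : ℕ, NiceDissection A (I \ {k | k < m})} := by
  refine ⟨fun I hI => hI.1, ?_, ?_⟩
  · intro B hB
    obtain ⟨I, hIB, hIinf, hND⟩ := density_core A hfin B hB
    exact ⟨I, ⟨hIinf, 0, hND.mono Set.diff_subset⟩, hIB⟩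
  · rintro I ⟨hIinf, m, hND⟩ I' hI' hdiff
    refine ⟨hI', ?_⟩
    obtain ⟨b, hb⟩ := hdiff.bddAbove
    refine ⟨max m (b + 1), hND.mono ?_⟩
    rintro x ⟨hxI', hx⟩
    simp only [Set.mem_setOf_eq, not_lt] at hx
    have hxm : m ≤ x := le_trans (le_max_left _ _) hx
    have hxb : b + 1 ≤ x := le_trans (le_max_right _ _) hx
    have hxI : x ∈ I := by
      by_contra hxI
      have hmem : x ∈ I' \ I := ⟨hxI', hxI⟩
      have := hb hmem
      omega
    exact ⟨hxI, by simp only [Set.mem_setOf_eq, not_lt]; exact hxm⟩
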